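/- Fix n ≥ 2 and β_i > 0 for i = 1,…,n, and suppose ν_1 = ν_2 = … = ν_n = 1 (a maximally social society). Then a point (x̄, ȳ_1, …, ȳ_n) ∈ ℝ^{n+1} is an equilibrium of the well-mixed consumption system if and only if ȳ_1 = ȳ_2 = … = ȳ_n (call the common value ȳ) and either x̄ = 0 or x̄ = 1 − n·ȳ. In particular there are infinitely many equilibria. -/

import Mathlib

/-- Equilibrium condition for the well-mixed consumption system:
`ẋ = (1−x)x − x·Σᵢ yᵢ`,
`ẏᵢ = βᵢ((1−νᵢ)(x−ρᵢ) + νᵢ((1/(n−1))·Σ_{j≠i} yⱼ − yᵢ))`. -/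
def WellMixedEq (n : ℕ) (β ν ρ : Fin n → ℝ) (x : ℝ) (y : Fin n → ℝ) : Prop :=
  ((1 - x) * x - x * ∑ i, y i = 0) ∧
  ∀ i : Fin n,
    β i * ((1 - ν i) * (x - ρ i)
      + ν i * ((1 / ((n : ℝ) - 1)) * (∑ j ∈ Finset.univ.erase i, y j) - y i)) = 0

/-- Maximally social society (`νᵢ = 1` for all `i`): the equilibria of the well-mixed
system are exactly the points with all efforts equal, `yᵢ = c`, and `x = 0` or
`x = 1 − n·c`; in particular there are infinitely many equilibria. -/
theorem well_mixed_maximally_social_equilibria (n : ℕ) (hn : 2 ≤ n)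
    (β ν ρ : Fin n → ℝ) (hβ : ∀ i, 0 < β i) (hν : ∀ i, ν i = 1) :
    (∀ (x : ℝ) (y : Fin n → ℝ),
      WellMixedEq n β ν ρ x y ↔
        ∃ c : ℝ, (∀ i, y i = c) ∧ (x = 0 ∨ x = 1 - n * c)) ∧
    {p : ℝ × (Fin n → ℝ) | WellMixedEq n β ν ρ p.1 p.2}.Infinite := by
  have hn2 : (2:ℝ) ≤ (n:ℝ) := by exact_mod_cast hn
  have hn1 : (n:ℝ) - 1 ≠ 0 := by linarith
  have hn0 : (n:ℝ) ≠ 0 := by linarith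
  have key : ∀ (x : ℝ) (y : Fin n → ℝ),
      WellMixedEq n β ν ρ x y ↔
        ∃ c : ℝ, (∀ i, y i = c) ∧ (x = 0 ∨ x = 1 - n * c) := by
    intro x y
    constructor
    · rintro ⟨h0, h⟩
      set S := ∑ i, y i with hS
      have hy : ∀ i, y i = S / n := by
        intro i
        have hi := h i
        rw [hν i] at hi
        have herase : ∑ j ∈ Finset.univ.erase i, y j = S - y i := by
          have := Finset.sum_erase_add Finset.univ y (Finset.mem_univ i)
          rw [hS]; linarith
        rw [herase] at hi
        have hβi := (hβ i).ne'
        have hinner : (1 / ((n : ℝ) - 1)) * (S - y i) - y i = 0 := by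
          rcases mul_eq_zero.1 hi with h' | h'
          · exact absurd h' hβi
          · linarith
        field_simp at hinner
        field_simp
        linarith
      refine ⟨S / n, hy, ?_⟩
      have hSn : S = n * (S / n) := by field_simp
      have hfac : x * (1 - x - n * (S / n)) = 0 := by
        rw [← hSn]; linarith
      rcases mul_eq_zero.1 hfac with h' | h'
      · left; exact h'
      · right; rw [← hSn]; linarith [mul_comm x S]
    · rintro ⟨c, hc, hx⟩
      have hsum : ∑ i, y i = n * c := by
        simp only [fun i => hc i, Finset.sum_const, Finset.card_univ, Fintype.card_fin,
          nsmul_eq_mul]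
      constructor
      · rw [hsum]
        rcases hx with h' | h' <;> rw [h'] <;> ring
      · intro i
        have herase : ∑ j ∈ Finset.univ.erase i, y j = ((n:ℝ) - 1) * c := by
          have := Finset.sum_erase_add Finset.univ y (Finset.mem_univ i)
          have : ∑ j ∈ Finset.univ.erase i, y j = (∑ j, y j) - y i := by linarith
          rw [this, hsum, hc i]; ring
        rw [hν i, herase, hc i]
        field_simp
        ring
  refine ⟨key, ?_⟩
  apply Set.infinite_of_injective_forall_mem
    (f := fun c : ℝ => ((0 : ℝ), fun _ : Fin n => c))
  · intro a b hab
    have := congrArg Prod.snd hab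
    exact congrFun this ⟨0, by omega⟩
  · intro c
    simp only [Set.mem_setOf_eq]
    exact (key 0 (fun _ => c)).2 ⟨c, fun _ => rfl, Or.inl rfl⟩
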